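/- For all i, j ∈ {1,2,3} and all n ∈ ℤ with n ≠ 0, one has [x*_{i,n}, x*_{j,0}] = (1/(2n)) Σ_k ε_{ijk} x^k_n as endomorphisms of V. -/

import Mathlib

open Finset

/-- Levi-Civita symbol on `{1,2,3}` (indexed by `Fin 3`). -/
def eps (i j k : Fin 3) : ℤ :=
  (((j : ℤ) - (i : ℤ)) * ((k : ℤ) - (i : ℤ)) * ((k : ℤ) - (j : ℤ))) / 2

variable {V : Type*} [AddCommGroup V] [Module ℂ V]

/-- `x^i_n`: equals the given `x^i_0` for `n = 0`, and `−(1/n) α^i_n` for `n ≠ 0`. -/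
noncomputable def xop (α : Fin 3 → ℤ → Module.End ℂ V) (x0 : Fin 3 → Module.End ℂ V)
    (i : Fin 3) (n : ℤ) : Module.End ℂ V :=
  if n = 0 then x0 i else (-(n : ℂ)⁻¹) • α i n

/-- `P_i = β_{i,0} + Σ_{j,k} ε_{ijk} x^j_0 W^k − ½ Σ_{j,k} ε_{ijk} Σ_{m∈ℤ} m x^j_{−m} x^k_m`,
defined pointwise on vectors (the inner sum has finitely many nonzero terms on each vector). -/
noncomputable def Pop (α β : Fin 3 → ℤ → Module.End ℂ V) (x0 : Fin 3 → Module.End ℂ V)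
    (i : Fin 3) : V → V := fun v =>
  β i 0 v + (∑ j : Fin 3, ∑ k : Fin 3, eps i j k • (x0 j) ((α k 0) v))
    - (2 : ℂ)⁻¹ • ∑ j : Fin 3, ∑ k : Fin 3, eps i j k •
        ∑ᶠ m : ℤ, (m : ℂ) • (xop α x0 j (-m)) ((xop α x0 k m) v)

/-- `x*_{i,n} = −(1/n)(β_{i,n} + Σ_{j,k} ε_{ijk} x^j_n W^k − ½ Σ_{j,k} ε_{ijk} Σ_m m x^j_{n−m} x^k_m)`
for `n ≠ 0`, defined pointwise on vectors. -/
noncomputable def xstarop (α β : Fin 3 → ℤ → Module.End ℂ V) (x0 : Fin 3 → Module.End ℂ V)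
    (i : Fin 3) (n : ℤ) : V → V := fun v =>
  (-(n : ℂ)⁻¹) • (β i n v + (∑ j : Fin 3, ∑ k : Fin 3, eps i j k • (xop α x0 j n) ((α k 0) v))
    - (2 : ℂ)⁻¹ • ∑ j : Fin 3, ∑ k : Fin 3, eps i j k •
        ∑ᶠ m : ℤ, (m : ℂ) • (xop α x0 j (n - m)) ((xop α x0 k m) v))

lemma eps_swap12 (i j k : Fin 3) : eps j i k = - eps i j k := by revert i j k; decide

lemma eps_swap23 (i j k : Fin 3) : eps i k j = - eps i j k := by revert i j k; decide

lemma comm_apply {V : Type*} [AddCommGroup V] [Module ℂ V]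
    {A B C : Module.End ℂ V} (h : ⁅A, B⁆ = C) (v : V) :
    A (B v) = B (A v) + C v := by
  have h2 := congrArg (fun T : Module.End ℂ V => T v) h
  simp only [Ring.lie_def, LinearMap.sub_apply, Module.End.mul_apply] at h2
  rw [sub_eq_iff_eq_add] at h2
  rw [h2]; abel

/-- `[x*_{i,n}, x*_{j,0}] = (1/(2n)) Σ_k ε_{ijk} x^k_n` for `n ≠ 0`
(as endomorphisms, checked pointwise). -/
theorem xstar_xstar0_commutator
    (α β : Fin 3 → ℤ → Module.End ℂ V) (x0 xstar0 : Fin 3 → Module.End ℂ V)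
    (R1 : ∀ (i j : Fin 3) (m n : ℤ), ⁅α i m, α j n⁆ = 0)
    (R2 : ∀ (i j : Fin 3) (m n : ℤ), ⁅β i m, α j n⁆
      = if i = j ∧ m + n = 0 then (m : ℂ) • (1 : Module.End ℂ V) else 0)
    (R3 : ∀ (i j : Fin 3) (m n : ℤ), ⁅β i m, β j n⁆ = ∑ k : Fin 3, eps i j k • α k (m + n))
    (R4 : ∀ v : V, ∃ N : ℤ, ∀ (i : Fin 3) (n : ℤ), N ≤ n → α i n v = 0 ∧ β i n v = 0)
    (R5a : ∀ (i j : Fin 3) (n : ℤ), ⁅α j n, x0 i⁆ = 0)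
    (R5b : ∀ i j : Fin 3, ⁅x0 i, x0 j⁆ = 0)
    (R6 : ∀ (i j : Fin 3) (n : ℤ), ⁅β j n, x0 i⁆
      = if i = j ∧ n = 0 then (1 : Module.End ℂ V) else 0)
    (R7 : ∀ (i j : Fin 3) (n : ℤ), ⁅xstar0 i, xop α x0 j n⁆ = 0)
    (R8 : ∀ i j : Fin 3, ⁅xstar0 i, xstar0 j⁆ = 0)
    (R9 : ∀ (i j : Fin 3) (n : ℤ), ⁅xstar0 i, β j n⁆
      = (2 : ℂ)⁻¹ • ∑ k : Fin 3, eps i j k • xop α x0 k n)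
    (R10 : ∀ (i j : Fin 3) (m : ℤ), ⁅α j m, xstar0 i⁆
      = if i = j ∧ m = 0 then (1 : Module.End ℂ V) else 0)
    (i j : Fin 3) (n : ℤ) (hn : n ≠ 0) (v : V) :
    xstarop α β x0 i n (xstar0 j v) - xstar0 j (xstarop α β x0 i n v)
      = ((2 * n : ℂ))⁻¹ • ∑ k : Fin 3, eps i j k • (xop α x0 k n) v := by
  have hXxop : ∀ (a : Fin 3) (m : ℤ) (w : V),
      xstar0 j (xop α x0 a m w) = xop α x0 a m (xstar0 j w) := by
    intro a m w
    have := comm_apply (R7 j a m) w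
    simpa using this
  have hαxop : ∀ (a b : Fin 3) (p q : ℤ), ⁅α a p, xop α x0 b q⁆ = 0 := by
    intro a b p q
    rw [xop]
    split
    · exact R5a b a p
    · rw [Ring.lie_def, mul_smul_comm, smul_mul_assoc, ← smul_sub, ← Ring.lie_def, R1, smul_zero]
  have hαxop' : ∀ (a b : Fin 3) (p q : ℤ) (w : V),
      α a p (xop α x0 b q w) = xop α x0 b q (α a p w) := by
    intro a b p q w
    have := comm_apply (hαxop a b p q) w
    simpa using this
  have hfin : ∀ (a b : Fin 3) (w : V),
      (Function.support fun m : ℤ =>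
        (m : ℂ) • (xop α x0 a (n - m)) ((xop α x0 b m) w)).Finite := by
    intro a b w
    obtain ⟨N, hN⟩ := R4 w
    apply Set.Finite.subset (Set.finite_Ioo (n - max N 1) (max N 1))
    intro m hm
    simp only [Function.mem_support] at hm
    simp only [Set.mem_Ioo]
    by_contra hc
    push_neg at hc
    apply hm
    have hN1 : (1 : ℤ) ≤ max N 1 := le_max_right N 1
    have hNN : N ≤ max N 1 := le_max_left N 1
    rcases le_or_gt (max N 1) m with h1 | h1
    · have hm0 : m ≠ 0 := by omega
      have hαw : α b m w = 0 := (hN b m (by omega)).1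
      have hx : (xop α x0 b m) w = 0 := by
        rw [xop, if_neg hm0, LinearMap.smul_apply, hαw, smul_zero]
      rw [hx, map_zero, smul_zero]
    · have h2 : m ≤ n - max N 1 := by
        by_contra h3
        push_neg at h3
        exact absurd (hc h3) (not_le.mpr h1)
      have hnm0 : n - m ≠ 0 := by omega
      have hαw : α a (n - m) w = 0 := (hN a (n - m) (by omega)).1
      have hx : (xop α x0 a (n - m)) ((xop α x0 b m) w) = 0 := by
        rw [xop, if_neg hnm0, LinearMap.smul_apply, hαxop', hαw, map_zero, smul_zero]
      rw [hx, smul_zero]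
  set S : V := ∑ k : Fin 3, eps i j k • (xop α x0 k n) v with hS
  have hβ : β i n (xstar0 j v) = xstar0 j (β i n v) + (2 : ℂ)⁻¹ • S := by
    have h1 := comm_apply (R9 j i n) v
    have h2 : ((2 : ℂ)⁻¹ • ∑ k : Fin 3, eps j i k • xop α x0 k n) v
        = -((2 : ℂ)⁻¹ • S) := by
      rw [LinearMap.smul_apply, LinearMap.coe_sum, Finset.sum_apply, ← smul_neg, hS,
        ← Finset.sum_neg_distrib]
      congr 1
      refine Finset.sum_congr rfl fun k _ => ?_
      rw [LinearMap.smul_apply, eps_swap12, neg_smul]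
    rw [h2] at h1
    rw [h1]; abel
  have hα0X : ∀ b : Fin 3, α b 0 (xstar0 j v)
      = xstar0 j (α b 0 v) + (if j = b then v else 0) := by
    intro b
    have h10 := R10 j b 0
    simp only [and_true] at h10
    have := comm_apply h10 v
    rw [this]
    congr 1
    split <;> simp
  have hA : (∑ a : Fin 3, ∑ b : Fin 3, eps i a b • (xop α x0 a n) ((α b 0) (xstar0 j v)))
      = xstar0 j (∑ a : Fin 3, ∑ b : Fin 3, eps i a b • (xop α x0 a n) ((α b 0) v)) - S := by
    have hterm : ∀ a b : Fin 3, (xop α x0 a n) ((α b 0) (xstar0 j v))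
        = xstar0 j ((xop α x0 a n) ((α b 0) v)) + (if j = b then (xop α x0 a n) v else 0) := by
      intro a b
      rw [hα0X b, map_add, apply_ite (xop α x0 a n), map_zero, hXxop]
    calc (∑ a : Fin 3, ∑ b : Fin 3, eps i a b • (xop α x0 a n) ((α b 0) (xstar0 j v)))
        = (∑ a : Fin 3, ∑ b : Fin 3, (eps i a b • xstar0 j ((xop α x0 a n) ((α b 0) v))
            + (if j = b then eps i a b • (xop α x0 a n) v else 0))) := by
          refine Finset.sum_congr rfl fun a _ => Finset.sum_congr rfl fun b _ => ?_
          rw [hterm a b, smul_add, smul_ite, smul_zero]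
      _ = xstar0 j (∑ a : Fin 3, ∑ b : Fin 3, eps i a b • (xop α x0 a n) ((α b 0) v))
            + ∑ a : Fin 3, ∑ b : Fin 3, (if j = b then eps i a b • (xop α x0 a n) v else 0) := by
          rw [map_sum, ← Finset.sum_add_distrib]
          refine Finset.sum_congr rfl fun a _ => ?_
          rw [map_sum, ← Finset.sum_add_distrib]
          refine Finset.sum_congr rfl fun b _ => ?_
          rw [map_zsmul]
      _ = xstar0 j (∑ a : Fin 3, ∑ b : Fin 3, eps i a b • (xop α x0 a n) ((α b 0) v)) - S := by
          have h3 : (∑ a : Fin 3, ∑ b : Fin 3,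
              (if j = b then eps i a b • (xop α x0 a n) v else 0)) = -S := by
            rw [hS, ← Finset.sum_neg_distrib]
            refine Finset.sum_congr rfl fun a _ => ?_
            rw [Finset.sum_ite_eq, if_pos (Finset.mem_univ j), eps_swap23, neg_smul]
          rw [h3, ← sub_eq_add_neg]
  have hB : (∑ a : Fin 3, ∑ b : Fin 3, eps i a b •
        ∑ᶠ m : ℤ, (m : ℂ) • (xop α x0 a (n - m)) ((xop α x0 b m) (xstar0 j v)))
      = xstar0 j (∑ a : Fin 3, ∑ b : Fin 3, eps i a b •
        ∑ᶠ m : ℤ, (m : ℂ) • (xop α x0 a (n - m)) ((xop α x0 b m) v)) := by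
    rw [map_sum]
    refine Finset.sum_congr rfl fun a _ => ?_
    rw [map_sum]
    refine Finset.sum_congr rfl fun b _ => ?_
    rw [map_zsmul]
    congr 1
    have hmap := ((xstar0 j).toAddMonoidHom).map_finsum (hfin a b v)
    simp only [LinearMap.toAddMonoidHom_coe] at hmap
    rw [hmap]
    refine finsum_congr fun m => ?_
    rw [map_smul, hXxop, hXxop]
  simp only [xstarop]
  rw [hβ, hA, hB, map_smul, map_sub, map_add, map_smul]
  have hn' : (n : ℂ) ≠ 0 := Int.cast_ne_zero.mpr hn
  match_scalars <;> (field_simp; try ring)
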